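/- Let k be a field of characteristic 0 and let Q, S, Q', S' ∈ k[T] be monic polynomials satisfying Q(T)·S(T) = Q'(T)·S'(T), Q(T−1)·S(T) = Q'(T−1)·S'(T), and gcd(Q, S) = 1. Then Q = Q' and S = S'. -/

import Mathlib

open Polynomial

/-- A polynomial over a char-zero field fixed by `T ↦ T - 1` is constant. -/
private lemma aux_const {k : Type*} [Field k] [CharZero k] {A : k[X]}
    (h : A.comp (X - 1) = A) : A = C (A.eval 0) := by
  have heval : ∀ x : k, A.eval (x - 1) = A.eval x := by
    intro x
    conv_rhs => rw [← h]
    simp [eval_comp]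
  have hnat : ∀ n : ℕ, A.eval (n : k) = A.eval 0 := by
    intro n
    induction n with
    | zero => simp
    | succ m ih =>
      have h2 := heval ((m : k) + 1)
      rw [add_sub_cancel_right] at h2
      rw [Nat.cast_succ, ← h2]
      exact ih
  have hBzero : A - C (A.eval 0) = 0 := by
    apply Polynomial.eq_zero_of_infinite_isRoot
    apply Set.Infinite.mono (s := (Set.range (Nat.cast : ℕ → k)))
      (t := {x | (A - C (A.eval 0)).IsRoot x})
    · rintro x ⟨n, rfl⟩
      simp [IsRoot, hnat n]
    · exact Set.infinite_range_of_injective Nat.cast_injective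
  exact sub_eq_zero.mp hBzero

private lemma aux_unit {k : Type*} [Field k] [CharZero k] {A : k[X]}
    (hA : A ≠ 0) (hdvd : A ∣ A.comp (X - 1)) : IsUnit A := by
  have hdX : (X - 1 : k[X]).natDegree = 1 := by
    simpa using natDegree_X_sub_C (1 : k)
  have hcompne : A.comp (X - 1) ≠ 0 := by
    intro h0
    rcases (comp_eq_zero_iff.mp h0) with h | ⟨_, h⟩
    · exact hA h
    · rw [h] at hdX; simp at hdX
  obtain ⟨r, hr⟩ := hdvd
  have hrne : r ≠ 0 := by rintro rfl; rw [mul_zero] at hr; exact hcompne hr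
  have hdeg : (A.comp (X - 1)).natDegree = A.natDegree := by
    rw [natDegree_comp, hdX, mul_one]
  have hrdeg : r.natDegree = 0 := by
    have := hdeg
    rw [hr, natDegree_mul hA hrne] at this
    omega
  have hrC : r = C (r.coeff 0) := eq_C_of_natDegree_eq_zero hrdeg
  have hlc : (A.comp (X - 1)).leadingCoeff = A.leadingCoeff := by
    rw [leadingCoeff_comp (by rw [hdX]; norm_num)]
    have h1 : (X - 1 : k[X]).leadingCoeff = 1 := by
      simpa using (monic_X_sub_C (1 : k)).leadingCoeff
    rw [h1, one_pow, mul_one]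
  have hr1 : r.coeff 0 = 1 := by
    have h2 : A.leadingCoeff = A.leadingCoeff * r.coeff 0 := by
      conv_lhs => rw [← hlc, hr, hrC]
      rw [leadingCoeff_mul, leadingCoeff_C]
    have hlcne : A.leadingCoeff ≠ 0 := leadingCoeff_ne_zero.mpr hA
    nth_rewrite 1 [show A.leadingCoeff = A.leadingCoeff * 1 by ring] at h2
    exact (mul_left_cancel₀ hlcne h2).symm
  have hfix : A.comp (X - 1) = A := by
    rw [hr, hrC, hr1, map_one, mul_one]
  have hAc := aux_const hfix
  rw [hAc]
  apply isUnit_C.mpr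
  apply isUnit_iff_ne_zero.mpr
  intro h0
  rw [h0, map_zero] at hAc
  exact hA hAc

theorem stmt1 {k : Type*} [Field k] [CharZero k] (Q S Q' S' : Polynomial k)
    (hQ : Q.Monic) (hS : S.Monic) (hQ' : Q'.Monic) (hS' : S'.Monic)
    (hprod : Q * S = Q' * S')
    (hshift : Q.comp (Polynomial.X - 1) * S = Q'.comp (Polynomial.X - 1) * S')
    (hco : IsCoprime Q S) :
    Q = Q' ∧ S = S' := by
  have hQne : Q ≠ 0 := hQ.ne_zero
  have hQ'ne : Q' ≠ 0 := hQ'.ne_zero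
  have hS'ne : S' ≠ 0 := hS'.ne_zero
  -- key identity: Q * Q'.comp(X-1) = Q' * Q.comp(X-1)
  have key : Q * Q'.comp (X - 1) = Q' * Q.comp (X - 1) := by
    have h1 : (Q * Q'.comp (X - 1)) * S' = (Q' * Q.comp (X - 1)) * S' := by
      calc (Q * Q'.comp (X - 1)) * S' = Q * (Q'.comp (X - 1) * S') := by ring
        _ = Q * (Q.comp (X - 1) * S) := by rw [← hshift]
        _ = Q.comp (X - 1) * (Q * S) := by ring
        _ = Q.comp (X - 1) * (Q' * S') := by rw [hprod]
        _ = (Q' * Q.comp (X - 1)) * S' := by ring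
    exact mul_right_cancel₀ hS'ne h1
  classical
  -- gcd decomposition
  obtain ⟨d, A, B, hdne, hAeq, hBeq, hAB⟩ :
      ∃ d A B : k[X], d ≠ 0 ∧ Q = d * A ∧ Q' = d * B ∧ IsCoprime A B := by
    obtain ⟨g, hgdef⟩ : ∃ g, g = EuclideanDomain.gcd Q Q' := ⟨_, rfl⟩
    obtain ⟨a, ha⟩ : ∃ a, a = EuclideanDomain.gcdA Q Q' := ⟨_, rfl⟩
    obtain ⟨b, hb⟩ : ∃ b, b = EuclideanDomain.gcdB Q Q' := ⟨_, rfl⟩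
    obtain ⟨A, hA⟩ : ∃ A, Q = g * A := by rw [hgdef]; exact EuclideanDomain.gcd_dvd_left Q Q'
    obtain ⟨B, hB⟩ : ∃ B, Q' = g * B := by rw [hgdef]; exact EuclideanDomain.gcd_dvd_right Q Q'
    have hgne : g ≠ 0 := by
      rw [hgdef]
      intro h0
      exact hQne (EuclideanDomain.gcd_eq_zero_iff.mp h0).1
    have hbez : g = Q * a + Q' * b := by
      rw [hgdef, ha, hb]; exact EuclideanDomain.gcd_eq_gcd_ab Q Q'
    rw [hA, hB] at hbez
    have h1 : g * 1 = g * (A * a + B * b) := by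
      rw [mul_one]
      conv_lhs => rw [hbez]
      ring
    have h2 := mul_left_cancel₀ hgne h1
    exact ⟨g, A, B, hgne, hA, hB, a, b, by linear_combination -h2⟩
  have hAne : A ≠ 0 := by rintro rfl; rw [mul_zero] at hAeq; exact hQne hAeq
  have hBne : B ≠ 0 := by rintro rfl; rw [mul_zero] at hBeq; exact hQ'ne hBeq
  have hdcne : d.comp (X - 1) ≠ 0 := by
    intro h0
    rcases comp_eq_zero_iff.mp h0 with h | ⟨_, h⟩
    · exact hdne h
    · have hh : (X - 1 : k[X]).natDegree = 1 := by simpa using natDegree_X_sub_C (1 : k)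
      rw [h] at hh; simp at hh
  -- cancel d * d.comp from key
  have key2 : A * B.comp (X - 1) = B * A.comp (X - 1) := by
    have hkey := key
    rw [hAeq, hBeq, mul_comp, mul_comp] at hkey
    have h2 : (d * d.comp (X - 1)) * (A * B.comp (X - 1))
        = (d * d.comp (X - 1)) * (B * A.comp (X - 1)) := by
      calc (d * d.comp (X - 1)) * (A * B.comp (X - 1))
          = (d * A) * (d.comp (X - 1) * B.comp (X - 1)) := by ring
        _ = (d * B) * (d.comp (X - 1) * A.comp (X - 1)) := hkey
        _ = (d * d.comp (X - 1)) * (B * A.comp (X - 1)) := by ring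
    exact mul_left_cancel₀ (mul_ne_zero hdne hdcne) h2
  have hAunit : IsUnit A :=
    aux_unit hAne (hAB.dvd_of_dvd_mul_left ⟨B.comp (X - 1), key2.symm⟩)
  have hBunit : IsUnit B :=
    aux_unit hBne (hAB.symm.dvd_of_dvd_mul_left ⟨A.comp (X - 1), key2⟩)
  have hassoc : Associated Q Q' := by
    have h1 : Associated d Q := ⟨hAunit.unit, by rw [IsUnit.unit_spec]; exact hAeq.symm⟩
    have h2 : Associated d Q' := ⟨hBunit.unit, by rw [IsUnit.unit_spec]; exact hBeq.symm⟩
    exact h1.symm.trans h2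
  have hQQ' : Q = Q' := eq_of_monic_of_associated hQ hQ' hassoc
  refine ⟨hQQ', ?_⟩
  rw [hQQ'] at hprod
  exact mul_left_cancel₀ hQ'ne hprod
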